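/- arXiv:2205.06515 — 5 statements merged into one kernel-verified Lean document; each statement's English description precedes it below -/
import Mathlib

section
/- Let d ≥ 2, λ₁ ≥ λ₂ ≥ ⋯ ≥ λ_d ≥ 0, and n₀, n₁, n₂ > 0 with n₁ ≥ n₂. Define R_a = λ₁/(n₀+n₁) + λ₂/(n₀+n₂) + ∑_{j≥3} λ_j/n₀ (different directions) and R_b = λ₁/(n₀+n₁+n₂) + ∑_{j≥2} λ_j/n₀ (same direction). Then R_b ≤ R_a if and only if λ₁/λ₂ ≥ (n₀+n₁)(n₀+n₁+n₂)/(n₀(n₀+n₂)) (with λ₂ > 0; if λ₂ = 0 then R_b ≤ R_a always). -/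
open Finset

/-- Two-node transmission: comparison of strategy (a) (different directions) and
strategy (b) (same direction) via the eigenvalue-ratio test. -/
theorem stmt_4 {d : ℕ} (hd : 2 ≤ d) (lam : Fin d → ℝ) (hmono : Antitone lam)
    (hnonneg : ∀ j, 0 ≤ lam j) (n₀ n₁ n₂ : ℝ)
    (hn₀ : 0 < n₀) (hn₁ : 0 < n₁) (hn₂ : 0 < n₂) (h12 : n₂ ≤ n₁) :
    (0 < lam ⟨1, by omega⟩ →
      (lam ⟨0, by omega⟩ / (n₀ + n₁ + n₂) + ∑ j ∈ univ \ {(⟨0, by omega⟩ : Fin d)}, lam j / n₀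
          ≤ lam ⟨0, by omega⟩ / (n₀ + n₁) + lam ⟨1, by omega⟩ / (n₀ + n₂)
            + ∑ j ∈ univ \ {(⟨0, by omega⟩ : Fin d), (⟨1, by omega⟩ : Fin d)}, lam j / n₀
        ↔ (n₀ + n₁) * (n₀ + n₁ + n₂) / (n₀ * (n₀ + n₂))
            ≤ lam ⟨0, by omega⟩ / lam ⟨1, by omega⟩)) ∧
    (lam ⟨1, by omega⟩ = 0 →
      lam ⟨0, by omega⟩ / (n₀ + n₁ + n₂) + ∑ j ∈ univ \ {(⟨0, by omega⟩ : Fin d)}, lam j / n₀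
        ≤ lam ⟨0, by omega⟩ / (n₀ + n₁) + lam ⟨1, by omega⟩ / (n₀ + n₂)
          + ∑ j ∈ univ \ {(⟨0, by omega⟩ : Fin d), (⟨1, by omega⟩ : Fin d)}, lam j / n₀) := by
  set i0 : Fin d := ⟨0, by omega⟩
  set i1 : Fin d := ⟨1, by omega⟩
  have hne : i1 ≠ i0 := by simp [i0, i1, Fin.ext_iff]
  have hsplit : ∑ j ∈ univ \ {i0}, lam j / n₀
      = lam i1 / n₀ + ∑ j ∈ univ \ {i0, i1}, lam j / n₀ := by
    rw [show (univ \ {i0, i1} : Finset (Fin d)) = (univ \ {i0}).erase i1 by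
      ext x; simp only [mem_sdiff, mem_univ, mem_insert, mem_singleton, mem_erase, true_and]
      tauto]
    exact (Finset.add_sum_erase _ _ (by simp [hne])).symm
  set A := lam i0 with hA
  set B := lam i1 with hB
  have hA0 : 0 ≤ A := hnonneg i0
  rw [hsplit]
  constructor
  · intro hBpos
    have key : A / (n₀ + n₁ + n₂) + B / n₀ ≤ A / (n₀ + n₁) + B / (n₀ + n₂)
        ↔ (n₀ + n₁) * (n₀ + n₁ + n₂) / (n₀ * (n₀ + n₂)) ≤ A / B := by
      rw [div_le_div_iff₀ (by positivity) hBpos,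
        div_add_div _ _ (by positivity : (n₀ + n₁ + n₂) ≠ 0) hn₀.ne',
        div_add_div _ _ (by positivity : (n₀ + n₁) ≠ 0) (by positivity : (n₀ + n₂) ≠ 0),
        div_le_div_iff₀ (by positivity) (by positivity)]
      constructor <;> intro h <;> nlinarith [mul_pos hn₀ hn₂, mul_pos hn₀ hn₁, sq_nonneg n₀,
        mul_pos (mul_pos hn₀ hn₂) hn₁, hn₂.le, hn₁.le, hn₀.le]
    constructor
    · intro h
      exact key.mp (by linarith)
    · intro h
      linarith [key.mpr h]
  · intro hB0
    rw [hB0]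
    have h1 : A / (n₀ + n₁ + n₂) ≤ A / (n₀ + n₁) := by
      rw [div_le_div_iff₀ (by positivity) (by positivity)]
      nlinarith
    simp only [zero_div, zero_add, add_zero]
    linarith
end

section
/- Let λ₁ ≥ λ₂ ≥ ⋯ ≥ λ_d ≥ 0, n₀ > 0, and n₁,…,n_k > 0 with k ≤ d. For any assignment c : {1,…,k} → {1,…,d}, define R(c) = ∑_{j=1}^{d} λ_j / (n₀ + ∑_{i: cᵢ = j} nᵢ). Then there exists an optimal assignment c* minimizing R with the property that the range of c* is contained in {1,…,k}, i.e., only the k largest-eigenvalue directions need ever be used. -/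
open Finset

/-- Any assignment can be improved to one using only the first `k` directions. -/
lemma stmt_7_aux {d k : ℕ} (hkd : k ≤ d) (lam : Fin d → ℝ) (hmono : Antitone lam)
    (hnonneg : ∀ j, 0 ≤ lam j) (n₀ : ℝ) (hn₀ : 0 < n₀)
    (n : Fin k → ℝ) (hn : ∀ i, 0 < n i) :
    ∀ N (c : Fin k → Fin d), (univ.filter (fun i => k ≤ (c i : ℕ))).card ≤ N →
      ∃ c' : Fin k → Fin d, (∀ i, (c' i : ℕ) < k) ∧
        (∑ j : Fin d, lam j / (n₀ + ∑ i ∈ univ.filter (fun i => c' i = j), n i))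
          ≤ ∑ j : Fin d, lam j / (n₀ + ∑ i ∈ univ.filter (fun i => c i = j), n i) := by
  classical
  intro N
  induction N with
  | zero =>
    intro c hc
    refine ⟨c, fun i => ?_, le_refl _⟩
    by_contra h
    push_neg at h
    have : i ∈ univ.filter (fun i => k ≤ (c i : ℕ)) := by simp [h]
    have := Finset.card_pos.mpr ⟨i, this⟩
    omega
  | succ N ih =>
    intro c hc
    by_cases hex : ∃ i, k ≤ (c i : ℕ)
    · obtain ⟨i₀, hi₀⟩ := hex
      set j₀ := c i₀ with hj₀
      -- find an unused direction j' with (j' : ℕ) < k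
      have hfree : ∃ j' : Fin d, (j' : ℕ) < k ∧ ∀ i, c i ≠ j' := by
        by_contra h'
        push_neg at h'
        set F : Finset (Fin d) := univ.filter (fun j => (j : ℕ) < k) with hF
        have hsub : insert j₀ F ⊆ (univ : Finset (Fin k)).image c := by
          rw [hF]
          intro j hj
          rcases Finset.mem_insert.mp hj with rfl | hj
          · exact Finset.mem_image.mpr ⟨i₀, Finset.mem_univ _, rfl⟩
          · obtain ⟨i, hi⟩ := h' j (by simpa using (Finset.mem_filter.mp hj).2)
            exact Finset.mem_image.mpr ⟨i, Finset.mem_univ _, hi⟩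
        have hcardf : F.card = k := by
          have : F = (univ : Finset (Fin k)).image (Fin.castLE hkd) := by
            rw [hF]
            ext j
            simp only [Finset.mem_filter, Finset.mem_univ, true_and, Finset.mem_image]
            constructor
            · intro hj
              exact ⟨⟨(j : ℕ), hj⟩, by ext; simp⟩
            · rintro ⟨a, rfl⟩
              exact a.isLt
          rw [this, Finset.card_image_of_injective _ (Fin.castLE_injective hkd)]
          simp
        have hnm : j₀ ∉ F := by
          rw [hF]
          simp only [Finset.mem_filter, Finset.mem_univ, true_and]
          omega
        have h1 : k + 1 ≤ (insert j₀ F).card := by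
          rw [Finset.card_insert_of_notMem hnm, hcardf]
        have h2 := Finset.card_le_card hsub
        have h3 := Finset.card_image_le (s := (univ : Finset (Fin k))) (f := c)
        simp only [Finset.card_univ, Fintype.card_fin] at h3
        omega
      obtain ⟨j', hj'k, hj'free⟩ := hfree
      have hne : j' ≠ j₀ := by
        intro h
        have := hj'k
        rw [h] at this
        omega
      set c' : Fin k → Fin d := fun i => if c i = j₀ then j' else c i with hc'
      -- filter facts
      have hfj₀ : (univ.filter (fun i => c' i = j₀)) = ∅ := by
        ext i
        simp only [Finset.mem_filter, Finset.mem_univ, true_and, Finset.notMem_empty,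
          iff_false, hc']
        split
        · exact hne
        · next h => exact h
      have hfj' : (univ.filter (fun i => c' i = j')) = (univ.filter (fun i => c i = j₀)) := by
        ext i
        simp only [Finset.mem_filter, Finset.mem_univ, true_and, hc']
        split
        · next h => simp [h]
        · next h => simp [h, hj'free i]
      have hfoth : ∀ j : Fin d, j ≠ j₀ → j ≠ j' →
          (univ.filter (fun i => c' i = j)) = (univ.filter (fun i => c i = j)) := by
        intro j h0 h1
        ext i
        simp only [Finset.mem_filter, Finset.mem_univ, true_and, hc']
        split
        · next h => constructor
                    · intro hh; exact absurd hh.symm h1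
                    · intro hh; rw [h] at hh; exact absurd hh.symm h0
        · exact Iff.rfl
      have hfj'c : (univ.filter (fun i => c i = j')) = ∅ := by
        ext i
        simp [hj'free i]
      -- the risk does not increase
      set S : ℝ := ∑ i ∈ univ.filter (fun i => c i = j₀), n i with hS
      have hS0 : 0 ≤ S := Finset.sum_nonneg fun i _ => (hn i).le
      have hR : (∑ j : Fin d, lam j / (n₀ + ∑ i ∈ univ.filter (fun i => c' i = j), n i))
          ≤ ∑ j : Fin d, lam j / (n₀ + ∑ i ∈ univ.filter (fun i => c i = j), n i) := by
        set f : Fin d → ℝ := fun j => lam j / (n₀ + ∑ i ∈ univ.filter (fun i => c i = j), n i)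
        set f' : Fin d → ℝ := fun j => lam j / (n₀ + ∑ i ∈ univ.filter (fun i => c' i = j), n i)
        have hdiff : ∑ j : Fin d, (f' j - f j)
            = ∑ j ∈ ({j₀, j'} : Finset (Fin d)), (f' j - f j) := by
          refine (Finset.sum_subset (Finset.subset_univ _) ?_).symm
          intro j _ hj
          simp only [Finset.mem_insert, Finset.mem_singleton, not_or] at hj
          simp [f, f', hfoth j hj.1 hj.2]
        have hpair : ∑ j ∈ ({j₀, j'} : Finset (Fin d)), (f' j - f j)
            = (f' j₀ - f j₀) + (f' j' - f j') :=
          Finset.sum_pair hne.symm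
        have hlam : lam j₀ ≤ lam j' := hmono (by omega : j' ≤ j₀)
        have hpos : (0 : ℝ) < n₀ + S := by linarith
        have hval : (f' j₀ - f j₀) + (f' j' - f j') ≤ 0 := by
          have e1 : f' j₀ = lam j₀ / n₀ := by simp [f', hfj₀]
          have e2 : f j₀ = lam j₀ / (n₀ + S) := by simp [f, hS]
          have e3 : f' j' = lam j' / (n₀ + S) := by simp [f', hfj', hS]
          have e4 : f j' = lam j' / n₀ := by simp [f, hfj'c]
          rw [e1, e2, e3, e4]
          rw [div_sub_div _ _ (ne_of_gt hn₀) (ne_of_gt hpos),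
              div_sub_div _ _ (ne_of_gt hpos) (ne_of_gt hn₀)]
          rw [div_add_div _ _ (ne_of_gt (mul_pos hn₀ hpos)) (ne_of_gt (mul_pos hpos hn₀))]
          apply div_nonpos_of_nonpos_of_nonneg
          · ring_nf
            nlinarith [mul_le_mul_of_nonneg_right hlam
              (by positivity : (0:ℝ) ≤ n₀ * S * (n₀ + S))]
          · positivity
        have := hdiff.trans hpair
        have hsum : ∑ j : Fin d, (f' j - f j) ≤ 0 := this ▸ hval
        rw [Finset.sum_sub_distrib] at hsum
        linarith
      -- the count strictly decreases
      have hcard : (univ.filter (fun i => k ≤ (c' i : ℕ))).card ≤ N := by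
        have hi₀mem : i₀ ∈ univ.filter (fun i => k ≤ (c i : ℕ)) := by
          simp only [Finset.mem_filter, Finset.mem_univ, true_and]; exact hi₀
        have hsub : (univ.filter (fun i => k ≤ (c' i : ℕ)))
            ⊆ (univ.filter (fun i => k ≤ (c i : ℕ))).erase i₀ := by
          intro i hi
          simp only [Finset.mem_filter, Finset.mem_univ, true_and, hc'] at hi
          by_cases h : c i = j₀
          · rw [if_pos h] at hi; omega
          · rw [if_neg h] at hi
            refine Finset.mem_erase.mpr ⟨?_, by simp [hi]⟩
            intro hii
            rw [hii] at h
            exact h rfl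
        have := Finset.card_le_card hsub
        rw [Finset.card_erase_of_mem hi₀mem] at this
        omega
      obtain ⟨c'', hc''k, hc''le⟩ := ih c' hcard
      exact ⟨c'', hc''k, hc''le.trans hR⟩
    · push_neg at hex
      exact ⟨c, fun i => hex i, le_refl _⟩

/-- There is an optimal assignment of nodes to eigendirections using only the `k`
largest-eigenvalue directions. -/
theorem stmt_7 {d k : ℕ} (hkd : k ≤ d) (lam : Fin d → ℝ) (hmono : Antitone lam)
    (hnonneg : ∀ j, 0 ≤ lam j) (n₀ : ℝ) (hn₀ : 0 < n₀)
    (n : Fin k → ℝ) (hn : ∀ i, 0 < n i) :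
    ∃ cstar : Fin k → Fin d,
      (∀ c : Fin k → Fin d,
        (∑ j : Fin d, lam j / (n₀ + ∑ i ∈ univ.filter (fun i => cstar i = j), n i))
          ≤ ∑ j : Fin d, lam j / (n₀ + ∑ i ∈ univ.filter (fun i => c i = j), n i)) ∧
      ∀ i, ((cstar i : ℕ) < k) := by
  classical
  rcases Nat.eq_zero_or_pos d with hd | hd
  · subst hd
    have hk0 : k = 0 := by omega
    subst hk0
    exact ⟨fun i => i.elim0, fun c => le_refl _, fun i => i.elim0⟩
  · have : Nonempty (Fin d) := ⟨⟨0, hd⟩⟩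
    obtain ⟨c₀, hc₀⟩ := Finite.exists_min
      (fun c : Fin k → Fin d =>
        ∑ j : Fin d, lam j / (n₀ + ∑ i ∈ univ.filter (fun i => c i = j), n i))
    obtain ⟨c', hrange, hle⟩ := stmt_7_aux hkd lam hmono hnonneg n₀ hn₀ n hn
      ((univ.filter (fun i => k ≤ (c₀ i : ℕ))).card) c₀ le_rfl
    exact ⟨c', fun c => hle.trans (hc₀ c), hrange⟩
end

section
/- Let H be symmetric PSD with orthonormal eigenbasis v₁,…,v_d and eigenvalues λ₁,…,λ_d, let n₀ > 0, n₁,…,n_k > 0, and let c : {1,…,k} → {1,…,d}. Setting uᵢ = v_{cᵢ}, one has tr[H (n₀ I + ∑_{i=1}^k nᵢ uᵢ uᵢᵀ)⁻¹] = ∑_{j=1}^{d} λ_j / (n₀ + ∑_{i: cᵢ = j} nᵢ). -/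
open Matrix Finset

lemma vmv_mul {d : ℕ} (a b c e : Fin d → ℝ) :
    vecMulVec a b * vecMulVec c e = (b ⬝ᵥ c) • vecMulVec a e := by
  ext i j
  simp only [Matrix.mul_apply, vecMulVec_apply, Matrix.smul_apply, smul_eq_mul,
    dotProduct, Finset.sum_mul]
  refine Finset.sum_congr rfl fun x _ => by ring

lemma sum_vmv_eq_one {d : ℕ} (v : Fin d → Fin d → ℝ)
    (hortho : ∀ i j, v i ⬝ᵥ v j = if i = j then (1 : ℝ) else 0) :
    ∑ j, vecMulVec (v j) (v j) = (1 : Matrix (Fin d) (Fin d) ℝ) := by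
  set A : Matrix (Fin d) (Fin d) ℝ := Matrix.of v with hA
  have h1 : A * Aᵀ = 1 := by
    ext i j
    simpa [hA, Matrix.mul_apply, Matrix.one_apply, dotProduct] using hortho i j
  have h2 : Aᵀ * A = 1 := mul_eq_one_comm.mp h1
  ext i j
  have := congrArg (fun M : Matrix (Fin d) (Fin d) ℝ => M i j) h2
  simpa [hA, Matrix.mul_apply, Matrix.sum_apply, vecMulVec_apply, mul_comm] using this

/-- Reduction of the matrix optimization to the integer program: with `uᵢ = v_{cᵢ}`
eigenvectors of `H`,
`tr[H (n₀ I + ∑ᵢ nᵢ uᵢuᵢᵀ)⁻¹] = ∑ⱼ λⱼ/(n₀ + ∑_{i : cᵢ = j} nᵢ)`. -/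
theorem stmt_11 {d k : ℕ} (lam : Fin d → ℝ) (hlam : ∀ j, 0 ≤ lam j)
    (v : Fin d → Fin d → ℝ)
    (hortho : ∀ i j, v i ⬝ᵥ v j = if i = j then (1 : ℝ) else 0)
    (H : Matrix (Fin d) (Fin d) ℝ)
    (hH : H = ∑ j, lam j • vecMulVec (v j) (v j))
    (n₀ : ℝ) (hn₀ : 0 < n₀) (n : Fin k → ℝ) (hn : ∀ i, 0 < n i)
    (c : Fin k → Fin d) :
    (H * (n₀ • (1 : Matrix (Fin d) (Fin d) ℝ)
        + ∑ i, n i • vecMulVec (v (c i)) (v (c i)))⁻¹).trace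
      = ∑ j : Fin d, lam j / (n₀ + ∑ i ∈ univ.filter (fun i => c i = j), n i) := by
  set Q : Fin d → Matrix (Fin d) (Fin d) ℝ := fun j => vecMulVec (v j) (v j) with hQ
  set s : Fin d → ℝ := fun j => ∑ i ∈ univ.filter (fun i => c i = j), n i with hs
  have hs0 : ∀ j, 0 < n₀ + s j := fun j =>
    add_pos_of_pos_of_nonneg hn₀ (Finset.sum_nonneg fun i _ => (hn i).le)
  have hsum1 : ∑ j, Q j = 1 := sum_vmv_eq_one v hortho
  have hgroup : ∑ i, n i • Q (c i) = ∑ j, s j • Q j := by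
    rw [← Finset.sum_fiberwise_of_maps_to (fun i _ => Finset.mem_univ (c i))
      (fun i => n i • Q (c i))]
    refine Finset.sum_congr rfl fun j _ => ?_
    rw [hs, Finset.sum_smul]
    refine Finset.sum_congr rfl fun i hi => ?_
    rw [(Finset.mem_filter.mp hi).2]
  have hM : n₀ • (1 : Matrix (Fin d) (Fin d) ℝ) + ∑ i, n i • Q (c i)
      = ∑ j, (n₀ + s j) • Q j := by
    rw [hgroup, ← hsum1, Finset.smul_sum, ← Finset.sum_add_distrib]
    exact Finset.sum_congr rfl fun j _ => (add_smul _ _ _).symm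
  set N : Matrix (Fin d) (Fin d) ℝ := ∑ j, (n₀ + s j)⁻¹ • Q j with hN
  have hQQ : ∀ a b, Q a * Q b = (if a = b then (1 : ℝ) else 0) • Q a := by
    intro a b
    rw [hQ]
    simp only
    rw [vmv_mul, hortho]
    by_cases h : a = b
    · subst h; rfl
    · simp [h]
  have hMN : (∑ j, (n₀ + s j) • Q j) * N = 1 := by
    rw [hN, Finset.sum_mul]
    have key : ∀ a ∈ (univ : Finset (Fin d)),
        ((n₀ + s a) • Q a) * (∑ b, (n₀ + s b)⁻¹ • Q b) = Q a := by
      intro a _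
      rw [Finset.mul_sum]
      rw [Finset.sum_eq_single a]
      · rw [smul_mul_assoc, mul_smul_comm, hQQ, if_pos rfl, one_smul, smul_smul,
          mul_inv_cancel₀ (hs0 a).ne', one_smul]
      · intro b _ hb
        rw [smul_mul_assoc, mul_smul_comm, hQQ, if_neg (Ne.symm hb), zero_smul,
          smul_zero, smul_zero]
      · intro h; exact absurd (Finset.mem_univ a) h
    rw [Finset.sum_congr rfl key, hsum1]
  have hinv : (n₀ • (1 : Matrix (Fin d) (Fin d) ℝ) + ∑ i, n i • Q (c i))⁻¹ = N := by
    rw [hM]; exact Matrix.inv_eq_right_inv hMN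
  rw [hinv, hH, hN, Finset.sum_mul]
  have key2 : ∀ a ∈ (univ : Finset (Fin d)),
      (lam a • vecMulVec (v a) (v a)) * (∑ b, (n₀ + s b)⁻¹ • Q b)
        = (lam a * (n₀ + s a)⁻¹) • Q a := by
    intro a _
    rw [Finset.mul_sum, Finset.sum_eq_single a]
    · rw [smul_mul_assoc, mul_smul_comm, show vecMulVec (v a) (v a) = Q a from rfl,
        hQQ, if_pos rfl, one_smul, smul_smul]
    · intro b _ hb
      rw [smul_mul_assoc, mul_smul_comm, show vecMulVec (v a) (v a) = Q a from rfl,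
        hQQ, if_neg (Ne.symm hb), zero_smul, smul_zero, smul_zero]
    · intro h; exact absurd (Finset.mem_univ a) h
  rw [Finset.sum_congr rfl key2, Matrix.trace_sum]
  refine Finset.sum_congr rfl fun a _ => ?_
  have htr : (Q a).trace = 1 := by
    have := hortho a a
    simp only [if_pos rfl] at this
    simpa [hQ, Matrix.trace, Matrix.diag, vecMulVec_apply, dotProduct] using this
  rw [Matrix.trace_smul, htr, smul_eq_mul, mul_one, div_eq_mul_inv]
end

section
/- Let λ₁ ≥ λ₂ ≥ ⋯ ≥ λ_d ≥ 0, n₀ > 0, and n₁ ≥ n₂ ≥ ⋯ ≥ n_k > 0 with k ≤ d. If the eigenvalues satisfy λ₁ = λ₂ = ⋯ = λ_k > 0, then the assignment cᵢ = i (each node to a distinct direction) minimizes R(c) = ∑_{j=1}^d λ_j/(n₀ + ∑_{i: cᵢ=j} nᵢ) over all assignments c : {1,…,k} → {1,…,d}. -/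
open Finset

lemma two_ineq (n₀ a b L : ℝ) (hn₀ : 0 < n₀) (ha : 0 ≤ a) (hb : 0 ≤ b) (hL : 0 ≤ L) :
    L / (n₀ + a) + L / (n₀ + b) ≤ L / (n₀ + a + b) + L / n₀ := by
  have h1 : 0 < n₀ + a := by linarith
  have h2 : 0 < n₀ + b := by linarith
  have h3 : 0 < n₀ + a + b := by linarith
  rw [div_add_div _ _ h1.ne' h2.ne', div_add_div _ _ h3.ne' hn₀.ne',
    div_le_div_iff₀ (by positivity) (by positivity)]
  nlinarith [mul_nonneg (mul_nonneg hL ha) hb, mul_nonneg ha hb, hn₀.le,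
    mul_nonneg (mul_nonneg (mul_nonneg hL ha) hb) hn₀.le,
    mul_nonneg (mul_nonneg (mul_nonneg hL ha) hb) ha,
    mul_nonneg (mul_nonneg (mul_nonneg hL ha) hb) hb]

lemma gsuper {ι : Type*} [DecidableEq ι] (n₀ L : ℝ) (hn₀ : 0 < n₀) (hL : 0 ≤ L)
    (T : Finset ι) (f : ι → ℝ) (hf : ∀ i ∈ T, 0 ≤ f i) :
    ∑ i ∈ T, (L / (n₀ + f i) - L / n₀) ≤ L / (n₀ + ∑ i ∈ T, f i) - L / n₀ := by
  induction T using Finset.induction with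
  | empty => simp
  | @insert a T haT ih =>
    rw [Finset.sum_insert haT, Finset.sum_insert haT]
    have hS : 0 ≤ ∑ i ∈ T, f i :=
      Finset.sum_nonneg fun i hi => hf i (Finset.mem_insert_of_mem hi)
    have hfa : 0 ≤ f a := hf a (Finset.mem_insert_self a T)
    have h2 := two_ineq n₀ (f a) (∑ i ∈ T, f i) L hn₀ hfa hS hL
    have ih' := ih fun i hi => hf i (Finset.mem_insert_of_mem hi)
    have : n₀ + f a + ∑ i ∈ T, f i = n₀ + (f a + ∑ i ∈ T, f i) := by ring
    rw [this] at h2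
    linarith

/-- If the top `k` eigenvalues are equal and positive, assigning each of the `k` nodes
to a distinct top direction (`cᵢ = i`) minimizes the risk over all assignments. -/
theorem stmt_16 {d k : ℕ} (hk : 0 < k) (hkd : k ≤ d) (lam : Fin d → ℝ)
    (hmono : Antitone lam) (hnonneg : ∀ j, 0 ≤ lam j)
    (heq : ∀ j : Fin d, (j : ℕ) < k → lam j = lam ⟨0, lt_of_lt_of_le hk hkd⟩)
    (hpos : 0 < lam ⟨0, lt_of_lt_of_le hk hkd⟩)
    (n₀ : ℝ) (hn₀ : 0 < n₀) (n : Fin k → ℝ) (hn : ∀ i, 0 < n i)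
    (hnmono : Antitone n) :
    ∀ c : Fin k → Fin d,
      (∑ j : Fin d, lam j / (n₀ + ∑ i ∈ univ.filter (fun i => Fin.castLE hkd i = j), n i))
        ≤ ∑ j : Fin d, lam j / (n₀ + ∑ i ∈ univ.filter (fun i => c i = j), n i) := by
  intro c
  set l0 := lam ⟨0, lt_of_lt_of_le hk hkd⟩ with hl0
  have hl0pos : 0 < l0 := hpos
  -- the correction function g s = l0/(n₀+s) - l0/n₀
  -- Step 1: LHS equals the lower bound
  have key1 : (∑ j : Fin d, lam j / (n₀ + ∑ i ∈ univ.filter (fun i => Fin.castLE hkd i = j), n i))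
      = ∑ j : Fin d, (lam j / n₀ +
          ∑ i ∈ univ.filter (fun i => Fin.castLE hkd i = j), (l0 / (n₀ + n i) - l0 / n₀)) := by
    refine Finset.sum_congr rfl fun j _ => ?_
    by_cases hjk : (j : ℕ) < k
    · have hfib : univ.filter (fun i : Fin k => Fin.castLE hkd i = j) = {⟨j, hjk⟩} := by
        ext i
        simp [Fin.ext_iff]
      rw [hfib]
      simp only [Finset.sum_singleton]
      rw [heq j hjk]
      have hpos' : 0 < n₀ + n (⟨j, hjk⟩ : Fin k) := by have := hn ⟨j, hjk⟩; linarith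
      field_simp
      ring
    · have hfib : univ.filter (fun i : Fin k => Fin.castLE hkd i = j) = ∅ := by
        ext i
        simp only [Finset.mem_filter, Finset.mem_univ, true_and, Finset.notMem_empty,
          iff_false]
        intro h
        apply hjk
        rw [← h]
        exact i.isLt
      rw [hfib]
      simp
  -- Step 2: RHS is at least the lower bound
  have key2 : ∀ j : Fin d,
      (lam j / n₀ + ∑ i ∈ univ.filter (fun i => c i = j), (l0 / (n₀ + n i) - l0 / n₀))
        ≤ lam j / (n₀ + ∑ i ∈ univ.filter (fun i => c i = j), n i) := by
    intro j
    set S := ∑ i ∈ univ.filter (fun i => c i = j), n i with hSdef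
    have hS : 0 ≤ S := Finset.sum_nonneg fun i _ => (hn i).le
    have hlamj : lam j ≤ l0 := hmono (by simp [Fin.le_def])
    have h1 : ∑ i ∈ univ.filter (fun i => c i = j), (l0 / (n₀ + n i) - l0 / n₀)
        ≤ l0 / (n₀ + S) - l0 / n₀ :=
      gsuper n₀ l0 hn₀ hl0pos.le _ _ (fun i _ => (hn i).le)
    have h2 : l0 / (n₀ + S) - l0 / n₀ ≤ lam j / (n₀ + S) - lam j / n₀ := by
      have hposS : 0 < n₀ + S := by linarith
      have e1 : l0 / (n₀ + S) - lam j / (n₀ + S) = (l0 - lam j) / (n₀ + S) := by ring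
      have e2 : l0 / n₀ - lam j / n₀ = (l0 - lam j) / n₀ := by ring
      have h3 : (l0 - lam j) / (n₀ + S) ≤ (l0 - lam j) / n₀ := by
        apply div_le_div_of_nonneg_left (by linarith) hn₀ (by linarith)
      linarith
    linarith
  rw [key1]
  calc ∑ j : Fin d, (lam j / n₀ +
          ∑ i ∈ univ.filter (fun i => Fin.castLE hkd i = j), (l0 / (n₀ + n i) - l0 / n₀))
      = ∑ j : Fin d, (lam j / n₀ +
          ∑ i ∈ univ.filter (fun i => c i = j), (l0 / (n₀ + n i) - l0 / n₀)) := by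
        rw [Finset.sum_add_distrib, Finset.sum_add_distrib]
        congr 1
        rw [Finset.sum_fiberwise_of_maps_to (fun i _ => Finset.mem_univ (Fin.castLE hkd i)),
          Finset.sum_fiberwise_of_maps_to (fun i _ => Finset.mem_univ (c i))]
    _ ≤ _ := Finset.sum_le_sum fun j _ => key2 j
end

section
/- Let H be a symmetric positive semidefinite d×d matrix with eigenvalues λ₁ ≥ ⋯ ≥ λ_d, and let n₀, n₁,…,n_k > 0. For any unit vectors u₁,…,u_k, tr[H(n₀I + ∑ᵢ nᵢuᵢuᵢᵀ)⁻¹] ≥ ∑_{j=1}^{d} λ_j/n₀ − (∑_{i=1}^{k} nᵢ/(n₀(n₀+nᵢ))) λ₁, so the risk reduction achievable by any k scalar transmissions is at most λ₁ ∑ᵢ nᵢ/(n₀(n₀+nᵢ)). -/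
open Matrix Finset

section Aux
variable {d : ℕ}

lemma psd_vecMulVec (w : Fin d → ℝ) : (vecMulVec w w).PosSemidef := by
  refine posSemidef_iff_dotProduct_mulVec.mpr ⟨?_, ?_⟩
  · ext i j
    simp [conjTranspose_apply, vecMulVec_apply, mul_comm]
  · intro x
    have : star x ⬝ᵥ (vecMulVec w w *ᵥ x) = (w ⬝ᵥ x) * (w ⬝ᵥ x) := by
      simp [vecMulVec_apply, mulVec, dotProduct, Finset.mul_sum, Finset.sum_mul]
      rw [Finset.sum_comm]
      congr 1; ext i; congr 1; ext j; ring
    rw [this]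
    exact mul_self_nonneg _

lemma psd_smul {A : Matrix (Fin d) (Fin d) ℝ} (hA : A.PosSemidef) {c : ℝ} (hc : 0 ≤ c) :
    (c • A).PosSemidef := by
  refine posSemidef_iff_dotProduct_mulVec.mpr ⟨?_, ?_⟩
  · unfold Matrix.IsHermitian
    rw [conjTranspose_smul, star_trivial, hA.1]
  · intro x
    have := hA.dotProduct_mulVec_nonneg x
    simp only [smul_mulVec, dotProduct_smul, smul_eq_mul]
    positivity

lemma psd_sum {ι : Type*} (s : Finset ι) (f : ι → Matrix (Fin d) (Fin d) ℝ)
    (hf : ∀ i ∈ s, (f i).PosSemidef) : (∑ i ∈ s, f i).PosSemidef := by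
  classical
  induction s using Finset.induction_on with
  | empty => simpa using Matrix.PosSemidef.zero
  | insert a s h ih =>
    rw [Finset.sum_insert h]
    exact (hf _ (Finset.mem_insert_self _ _)).add
      (ih fun i hi => hf i (Finset.mem_insert_of_mem hi))

lemma psd_trace_nonneg {A : Matrix (Fin d) (Fin d) ℝ} (hA : A.PosSemidef) : 0 ≤ A.trace := by
  rw [Matrix.trace]
  refine Finset.sum_nonneg fun i _ => ?_
  have := hA.dotProduct_mulVec_nonneg (Pi.single i 1)
  simpa [mulVec_single, dotProduct, Pi.single_apply] using this

lemma psd_trace_mul_nonneg {A B : Matrix (Fin d) (Fin d) ℝ}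
    (hA : A.PosSemidef) (hB : B.PosSemidef) : 0 ≤ (A * B).trace := by
  obtain ⟨C, hC⟩ : ∃ C : Matrix (Fin d) (Fin d) ℝ, A = Cᴴ * C := by
    open scoped MatrixOrder in exact CStarAlgebra.nonneg_iff_eq_star_mul_self.mp hA.nonneg
  rw [hC, Matrix.mul_assoc, ← Matrix.mul_assoc, Matrix.trace_mul_cycle, Matrix.trace_mul_cycle]
  exact psd_trace_nonneg (hB.mul_mul_conjTranspose_same C)

lemma trace_vecMulVec_mul (w : Fin d → ℝ) (A : Matrix (Fin d) (Fin d) ℝ) :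
    (vecMulVec w w * A).trace = w ⬝ᵥ (Aᵀ *ᵥ w) := by
  simp [Matrix.trace, Matrix.mul_apply, vecMulVec_apply, dotProduct, mulVec, Matrix.diag,
    Finset.mul_sum]
  congr 1; ext i; congr 1; ext j; ring

lemma trace_vecMulVec (w : Fin d → ℝ) : (vecMulVec w w).trace = w ⬝ᵥ w := by
  simp [Matrix.trace, vecMulVec_apply, dotProduct, Matrix.diag]

lemma vecMulVec_mulVec' (a b x : Fin d → ℝ) : vecMulVec a b *ᵥ x = (b ⬝ᵥ x) • a := by
  ext i
  simp [Matrix.mulVec, vecMulVec_apply, dotProduct, Finset.sum_mul, Finset.mul_sum]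
  congr 1; ext j; ring

lemma sum_mulVec' {ι : Type*} (s : Finset ι) (f : ι → Matrix (Fin d) (Fin d) ℝ)
    (x : Fin d → ℝ) : (∑ i ∈ s, f i) *ᵥ x = ∑ i ∈ s, f i *ᵥ x := by
  ext j
  simp [Matrix.mulVec, dotProduct, Matrix.sum_apply, Finset.sum_mul]
  rw [Finset.sum_comm]

lemma sum_dotProduct' {ι : Type*} (s : Finset ι) (f : ι → Fin d → ℝ) (w : Fin d → ℝ) :
    (∑ i ∈ s, f i) ⬝ᵥ w = ∑ i ∈ s, f i ⬝ᵥ w := by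
  simp [dotProduct, Finset.sum_apply, Finset.sum_mul]
  rw [Finset.sum_comm]

end Aux

/-- Upper bound on achievable risk reduction: for any unit vectors `u₁,…,u_k`,
`tr[H(n₀I + ∑ᵢ nᵢuᵢuᵢᵀ)⁻¹] ≥ ∑ⱼ λⱼ/n₀ − λ₁ ∑ᵢ nᵢ/(n₀(n₀+nᵢ))`. -/
theorem stmt_19 {d k : ℕ} (hd : 0 < d) (lam : Fin d → ℝ) (hmono : Antitone lam)
    (hnonneg : ∀ j, 0 ≤ lam j)
    (v : Fin d → Fin d → ℝ)
    (hortho : ∀ i j, v i ⬝ᵥ v j = if i = j then (1 : ℝ) else 0)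
    (H : Matrix (Fin d) (Fin d) ℝ)
    (hH : H = ∑ j, lam j • vecMulVec (v j) (v j))
    (n₀ : ℝ) (hn₀ : 0 < n₀) (n : Fin k → ℝ) (hn : ∀ i, 0 < n i)
    (u : Fin k → Fin d → ℝ) (hunit : ∀ i, u i ⬝ᵥ u i = 1) :
    (∑ j : Fin d, lam j / n₀) - (∑ i, n i / (n₀ * (n₀ + n i))) * lam ⟨0, hd⟩
      ≤ (H * (n₀ • (1 : Matrix (Fin d) (Fin d) ℝ)
          + ∑ i, n i • vecMulVec (u i) (u i))⁻¹).trace := by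
  classical
  set S : Matrix (Fin d) (Fin d) ℝ := ∑ i, n i • vecMulVec (u i) (u i) with hSdef
  set M : Matrix (Fin d) (Fin d) ℝ := n₀ • (1 : Matrix (Fin d) (Fin d) ℝ) + S with hMdef
  have hS : S.PosSemidef :=
    psd_sum _ _ fun i _ => psd_smul (psd_vecMulVec (u i)) (hn i).le
  have hId : ((n₀ : ℝ) • (1 : Matrix (Fin d) (Fin d) ℝ)).PosDef := by
    rw [Matrix.smul_one_eq_diagonal]
    exact Matrix.posDef_diagonal_iff.mpr fun _ => hn₀
  have hM : M.PosDef := hId.add_posSemidef hS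
  have hdet : IsUnit M.det := hM.det_pos.ne'.isUnit
  have hMM : M * M⁻¹ = 1 := Matrix.mul_nonsing_inv M hdet
  have hMinv : M⁻¹.PosSemidef := hM.posSemidef.inv
  -- P = S M⁻¹ is PSD
  set P : Matrix (Fin d) (Fin d) ℝ := S * M⁻¹ with hPdef
  have hPexpr : P = M⁻¹ᴴ * (n₀ • S + S * S) * M⁻¹ := by
    rw [hMinv.1]
    have h2 : (n₀ • S + S * S) = M * S := by
      rw [hMdef, add_mul, smul_mul_assoc, one_mul]
    rw [h2, ← Matrix.mul_assoc, Matrix.nonsing_inv_mul M hdet, one_mul]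
  have hSS : (S * S).PosSemidef := by
    have := Matrix.posSemidef_conjTranspose_mul_self S
    rwa [hS.1] at this
  have hP : P.PosSemidef := by
    rw [hPexpr]
    exact ((psd_smul hS hn₀.le).add hSS).conjTranspose_mul_mul_same M⁻¹
  -- trace identity
  have h1 : n₀ • M⁻¹ + P = 1 := by
    rw [hPdef]
    calc n₀ • M⁻¹ + S * M⁻¹ = (n₀ • (1 : Matrix (Fin d) (Fin d) ℝ) + S) * M⁻¹ := by
          rw [add_mul, smul_mul_assoc, one_mul]
      _ = M * M⁻¹ := by rw [← hMdef]
      _ = 1 := hMM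
  have hsub : n₀ • M⁻¹ = 1 - P := eq_sub_of_add_eq h1
  have key : n₀ * (H * M⁻¹).trace = H.trace - (H * P).trace := by
    calc n₀ * (H * M⁻¹).trace = (H * (n₀ • M⁻¹)).trace := by
          rw [mul_smul_comm, trace_smul, smul_eq_mul]
      _ = (H * (1 - P)).trace := by rw [hsub]
      _ = H.trace - (H * P).trace := by rw [mul_sub, mul_one, trace_sub]
  -- completeness of the eigenbasis
  have hsumv : ∑ j, vecMulVec (v j) (v j) = (1 : Matrix (Fin d) (Fin d) ℝ) := by
    have hVV : (Matrix.of v) * (Matrix.of v)ᵀ = 1 := by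
      ext i j
      simpa [Matrix.mul_apply, Matrix.one_apply, dotProduct] using hortho i j
    have hVV2 : (Matrix.of v)ᵀ * (Matrix.of v) = 1 := mul_eq_one_comm.mp hVV
    rw [← hVV2]
    ext a b
    simp [Matrix.mul_apply, Matrix.transpose_apply, Matrix.sum_apply, vecMulVec_apply]
  set lam1 : ℝ := lam ⟨0, hd⟩ with hlam1
  have hlam1le : ∀ j, lam j ≤ lam1 := fun j => hmono (Fin.le_def.mpr (Nat.zero_le _))
  have hgap : (lam1 • (1 : Matrix (Fin d) (Fin d) ℝ) - H).PosSemidef := by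
    have heq : lam1 • (1 : Matrix (Fin d) (Fin d) ℝ) - H
        = ∑ j, (lam1 - lam j) • vecMulVec (v j) (v j) := by
      rw [hH, ← hsumv, Finset.smul_sum, ← Finset.sum_sub_distrib]
      congr 1; ext j; rw [sub_smul]
    rw [heq]
    exact psd_sum _ _ fun j _ => psd_smul (psd_vecMulVec _) (by linarith [hlam1le j])
  have hHP : (H * P).trace ≤ lam1 * P.trace := by
    have h0 : 0 ≤ ((lam1 • (1 : Matrix (Fin d) (Fin d) ℝ) - H) * P).trace :=
      psd_trace_mul_nonneg hgap hP
    rw [sub_mul, smul_mul_assoc, one_mul, trace_sub, trace_smul, smul_eq_mul] at h0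
    linarith
  -- bound on trace of P
  have htrP : P.trace ≤ ∑ i, n i / (n₀ + n i) := by
    rw [hPdef, hSdef, Finset.sum_mul, trace_sum]
    refine Finset.sum_le_sum fun i _ => ?_
    rw [smul_mul_assoc, trace_smul, smul_eq_mul]
    have htr : (vecMulVec (u i) (u i) * M⁻¹).trace = u i ⬝ᵥ (M⁻¹ *ᵥ u i) := by
      rw [trace_vecMulVec_mul]
      congr 2
      have h3 := hMinv.1
      rw [Matrix.IsHermitian, conjTranspose_eq_transpose_of_trivial] at h3
      rw [h3]
    rw [htr]
    set w : Fin d → ℝ := M⁻¹ *ᵥ u i with hwdef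
    set t : ℝ := u i ⬝ᵥ w with htdef
    have hw : M *ᵥ w = u i := by
      rw [hwdef, Matrix.mulVec_mulVec, hMM, Matrix.one_mulVec]
    have ht : t = n₀ * (w ⬝ᵥ w) + ∑ j, n j * (u j ⬝ᵥ w) ^ 2 := by
      have h2 : t = (M *ᵥ w) ⬝ᵥ w := by rw [hw, htdef]
      rw [h2, hMdef, Matrix.add_mulVec, add_dotProduct]
      congr 1
      · simp [smul_mulVec, Matrix.one_mulVec, smul_dotProduct]
      · rw [hSdef, sum_mulVec', sum_dotProduct']
        refine Finset.sum_congr rfl fun j _ => ?_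
        rw [smul_mulVec, vecMulVec_mulVec', smul_dotProduct, smul_dotProduct,
          smul_eq_mul, smul_eq_mul, sq]
    have hww : 0 ≤ w ⬝ᵥ w :=
      Finset.sum_nonneg fun _ _ => mul_self_nonneg _
    have hCS : t ^ 2 ≤ w ⬝ᵥ w := by
      have h := Finset.sum_mul_sq_le_sq_mul_sq Finset.univ (u i) w
      have hu : ∑ x, u i x ^ 2 = 1 := by
        simpa [dotProduct, sq] using hunit i
      rw [hu, one_mul] at h
      simpa [htdef, dotProduct, sq] using h
    have ht0 : 0 ≤ t := by
      rw [ht]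
      have : 0 ≤ ∑ j, n j * (u j ⬝ᵥ w) ^ 2 :=
        Finset.sum_nonneg fun j _ => mul_nonneg (hn j).le (sq_nonneg _)
      nlinarith
    have hineq : (n₀ + n i) * t ^ 2 ≤ t := by
      have h1 : n i * (u i ⬝ᵥ w) ^ 2 ≤ ∑ j, n j * (u j ⬝ᵥ w) ^ 2 :=
        Finset.single_le_sum (f := fun j => n j * (u j ⬝ᵥ w) ^ 2)
          (fun j _ => mul_nonneg (hn j).le (sq_nonneg _)) (Finset.mem_univ i)
      have h2 : (u i ⬝ᵥ w) ^ 2 = t ^ 2 := by rw [htdef]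
      nlinarith [hCS, (hn i).le, hn₀.le]
    have hni : 0 < n₀ + n i := by linarith [hn i]
    have htle : t ≤ 1 / (n₀ + n i) := by
      rcases eq_or_lt_of_le ht0 with h | h
      · rw [← h]; positivity
      · rw [le_div_iff₀ hni]
        nlinarith [hineq, h]
    calc n i * t ≤ n i * (1 / (n₀ + n i)) :=
          mul_le_mul_of_nonneg_left htle (hn i).le
      _ = n i / (n₀ + n i) := by ring
  -- trace of H
  have htrH : H.trace = ∑ j, lam j := by
    rw [hH, trace_sum]
    refine Finset.sum_congr rfl fun j _ => ?_
    rw [trace_smul, _root_.trace_vecMulVec, hortho j j, if_pos rfl, smul_eq_mul, mul_one]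
  -- combine
  have hPt : 0 ≤ P.trace := psd_trace_nonneg hP
  have hfinal : (∑ j, lam j) - (∑ i, n i / (n₀ + n i)) * lam1 ≤ n₀ * (H * M⁻¹).trace := by
    rw [key, htrH]
    have h3 : lam1 * P.trace ≤ lam1 * (∑ i, n i / (n₀ + n i)) :=
      mul_le_mul_of_nonneg_left htrP (hnonneg _)
    nlinarith [hHP]
  have e1 : ∑ i, n i / (n₀ * (n₀ + n i)) = (∑ i, n i / (n₀ + n i)) / n₀ := by
    rw [Finset.sum_div]
    refine Finset.sum_congr rfl fun i _ => ?_
    rw [div_div, mul_comm]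
  have hLHS : (∑ j : Fin d, lam j / n₀) - (∑ i, n i / (n₀ * (n₀ + n i))) * lam1
      = ((∑ j, lam j) - (∑ i, n i / (n₀ + n i)) * lam1) / n₀ := by
    rw [e1, sub_div]
    congr 1
    · rw [Finset.sum_div]
    · rw [div_mul_eq_mul_div]
  rw [hLHS, div_le_iff₀ hn₀]
  linarith [hfinal, mul_comm ((H * M⁻¹).trace) n₀]
end
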